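/- Let μ be the measure on ℝ² given by μ = (1/2)·(Exp(1) ⊗ Exp(3)) + (1/2)·T, where Exp(λ) denotes the exponential distribution with rate λ (density λe^{−λx} on [0,∞)), Exp(1) ⊗ Exp(3) is the product measure, and T is the pushforward of Exp(2) under the map y ↦ (y, y). Then for every x¹, x² ∈ ℝ, n·( 1 − μ( (−∞, log n + x¹] × (−∞, log n + x²] ) ) → (1/2)·e^{−x¹} as n → ∞. -/

import Mathlib

open MeasureTheory Filter Set
open scoped ENNReal

/-- The exponential distribution with rate `r`: density `r * exp (-(r * x))` on `[0, ∞)`. -/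
noncomputable def expMeas (r : ℝ) : Measure ℝ :=
  volume.withDensity fun x => ENNReal.ofReal (if 0 ≤ x then r * Real.exp (-(r * x)) else 0)

/-- The mixture measure of Example 3.7:
`μ = (1/2)·(Exp(1) ⊗ Exp(3)) + (1/2)·(pushforward of Exp(2) under y ↦ (y,y))`. -/
noncomputable def mixMeas : Measure (ℝ × ℝ) :=
  (1/2 : ℝ≥0∞) • (expMeas 1).prod (expMeas 3) +
    (1/2 : ℝ≥0∞) • (expMeas 2).map (fun y => (y, y))

lemma expMeas_eq (r : ℝ) : expMeas r = ProbabilityTheory.expMeasure r := by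
  rw [expMeas, ProbabilityTheory.expMeasure, ProbabilityTheory.gammaMeasure]
  congr 1
  funext x
  exact (ProbabilityTheory.exponentialPDF_eq r x).symm

lemma expMeas_prob {r : ℝ} (hr : 0 < r) : IsProbabilityMeasure (expMeas r) := by
  rw [expMeas_eq]; exact ProbabilityTheory.isProbabilityMeasure_expMeasure hr

lemma expMeas_Iic {r : ℝ} (hr : 0 < r) (t : ℝ) :
    expMeas r (Iic t) = ENNReal.ofReal (if 0 ≤ t then 1 - Real.exp (-(r * t)) else 0) := by
  rw [expMeas, withDensity_apply _ measurableSet_Iic,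
    ← ProbabilityTheory.lintegral_exponentialPDF_eq_antiDeriv hr]
  simp [ProbabilityTheory.exponentialPDF_eq]

lemma mix_apply {a b : ℝ} (ha : 0 ≤ a) (hb : 0 ≤ b) :
    (mixMeas (Iic a ×ˢ Iic b)).toReal =
      1/2 * ((1 - Real.exp (-(1*a))) * (1 - Real.exp (-(3*b)))) +
        1/2 * (1 - Real.exp (-(2 * min a b))) := by
  haveI := expMeas_prob three_pos
  have hpre : (fun y : ℝ => (y, y)) ⁻¹' (Iic a ×ˢ Iic b) = Iic (min a b) := by
    ext y; simp [le_min_iff]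
  rw [mixMeas, Measure.add_apply, Measure.smul_apply, Measure.smul_apply, Measure.prod_prod,
    Measure.map_apply (f := fun y : ℝ => (y, y)) (by fun_prop)
      (measurableSet_Iic.prod measurableSet_Iic), hpre,
    expMeas_Iic one_pos, expMeas_Iic three_pos, expMeas_Iic two_pos,
    if_pos ha, if_pos hb, if_pos (le_min ha hb)]
  have h1 : (0:ℝ) ≤ 1 - Real.exp (-(1*a)) := by
    have := Real.exp_le_one_iff.mpr (by linarith : -(1*a) ≤ 0); linarith
  have h3 : (0:ℝ) ≤ 1 - Real.exp (-(3*b)) := by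
    have := Real.exp_le_one_iff.mpr (by linarith : -(3*b) ≤ 0); linarith
  have h2 : (0:ℝ) ≤ 1 - Real.exp (-(2 * min a b)) := by
    have hm := le_min ha hb
    have := Real.exp_le_one_iff.mpr (by linarith : -(2 * min a b) ≤ 0); linarith
  rw [smul_eq_mul, smul_eq_mul, ENNReal.toReal_add, ENNReal.toReal_mul, ENNReal.toReal_mul,
    ENNReal.toReal_mul, ENNReal.toReal_ofReal h1, ENNReal.toReal_ofReal h3,
    ENNReal.toReal_ofReal h2]
  · norm_num
  · exact ENNReal.mul_ne_top (by norm_num) (ENNReal.mul_ne_top ENNReal.ofReal_ne_top ENNReal.ofReal_ne_top)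
  · exact ENNReal.mul_ne_top (by norm_num) ENNReal.ofReal_ne_top

theorem mixture_exp_domain_of_attraction :
    ∀ x1 x2 : ℝ,
      Tendsto (fun n : ℕ =>
          (n : ℝ) * (1 - (mixMeas (Iic (Real.log n + x1) ×ˢ Iic (Real.log n + x2))).toReal))
        atTop (nhds ((1/2) * Real.exp (-x1))) := by
  intro x1 x2
  set L : ℕ → ℝ := fun n =>
    1/2 * Real.exp (-x1) + (1/2 * Real.exp (-(3*x2))) * ((n:ℝ)⁻¹)^2
      - (1/2 * Real.exp (-x1) * Real.exp (-(3*x2))) * ((n:ℝ)⁻¹)^3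
      + (1/2 * Real.exp (-(2*min x1 x2))) * (n:ℝ)⁻¹ with hLdef
  have hinv := tendsto_inv_atTop_nhds_zero_nat (𝕜 := ℝ)
  have hL : Tendsto L atTop (nhds (1/2 * Real.exp (-x1))) := by
    have h : Tendsto L atTop (nhds
        (1/2 * Real.exp (-x1) + (1/2 * Real.exp (-(3*x2))) * (0:ℝ)^2
          - (1/2 * Real.exp (-x1) * Real.exp (-(3*x2))) * (0:ℝ)^3
          + (1/2 * Real.exp (-(2*min x1 x2))) * (0:ℝ))) :=
      ((tendsto_const_nhds.add ((hinv.pow 2).const_mul _)).sub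
        ((hinv.pow 3).const_mul _)).add (hinv.const_mul _)
    simpa using h
  apply hL.congr'
  have h1 := (Real.tendsto_log_atTop.comp
    (tendsto_natCast_atTop_atTop (R := ℝ))).eventually_ge_atTop (-x1)
  have h2 := (Real.tendsto_log_atTop.comp
    (tendsto_natCast_atTop_atTop (R := ℝ))).eventually_ge_atTop (-x2)
  filter_upwards [eventually_ge_atTop 1, h1, h2] with n hn hx1 hx2
  have hn0 : (0:ℝ) < n := by exact_mod_cast hn
  have hne : (n:ℝ) ≠ 0 := ne_of_gt hn0
  set t := Real.log (n:ℝ) with ht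
  have ha : 0 ≤ t + x1 := by simpa using neg_le_iff_add_nonneg.mp hx1
  have hb : 0 ≤ t + x2 := by simpa using neg_le_iff_add_nonneg.mp hx2
  have he : Real.exp t = n := Real.exp_log hn0
  rw [mix_apply ha hb]
  have hmin : min (t + x1) (t + x2) = t + min x1 x2 := min_add_add_left t x1 x2
  have e1 : Real.exp (-(1*(t+x1))) = Real.exp (-x1) / n := by
    rw [show -(1*(t+x1)) = -x1 - t by ring, Real.exp_sub, he]
  have e3 : Real.exp (-(3*(t+x2))) = Real.exp (-(3*x2)) / (n:ℝ)^3 := by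
    rw [show -(3*(t+x2)) = -(3*x2) - (3:ℕ)*t by push_cast; ring, Real.exp_sub,
      Real.exp_nat_mul, he]
  have e2 : Real.exp (-(2*min (t+x1) (t+x2))) = Real.exp (-(2*min x1 x2)) / (n:ℝ)^2 := by
    rw [hmin, show -(2*(t + min x1 x2)) = -(2*min x1 x2) - (2:ℕ)*t by push_cast; ring,
      Real.exp_sub, Real.exp_nat_mul, he]
  rw [e1, e3, e2, hLdef]
  field_simp
  ring
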